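/- arXiv:1902.09261 — 10 statements merged into one kernel-verified Lean document; each statement's English description precedes it below -/
import Mathlib

section
/- Let x0 > 0, y0 > 0, α > 0 and g, q, b, z_d ∈ ℝ, and let u_α(x) = -g·x²/2 + (g·x0 - q)·x + (g·x0 - q)/α + b. Then (1/2)·∫₀^{y0} ∫₀^{x0} (u_α(x) - z_d)² dx dy = (y0/2)·[ C₁α·g²·x0⁵ + C₂α·q²·x0³ + C₃α·x0·(b - z_d)² + C₄α·g·q·x0⁴ + C₅α·g·x0³·(b - z_d) + C₆α·q·x0²·(b - z_d) ], where C₁α = 2/15 + 2/(3·α·x0) + 1/(α²·x0²), C₂α = 1/3 + 1/(α·x0) + 1/(α²·x0²), C₃α = 1, C₄α = -5/12 - 5/(3·α·x0) - 2/(α²·x0²), C₅α = 2/3 + 2/(α·x0), C₆α = -1 - 2/(α·x0). Moreover C_{iα} → C_i as α → ∞ for each i, where C₁ = 2/15, C₂ = 1/3, C₃ = 1, C₄ = -5/12, C₅ = 2/3, C₆ = -1. -/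
open Filter

lemma aux_inv_tendsto : Tendsto (fun α : ℝ => α⁻¹) atTop (nhds 0) :=
  tendsto_inv_atTop_zero

lemma aux_gen_tendsto (c d e : ℝ) :
    Tendsto (fun α : ℝ => c + d * α⁻¹ + e * (α⁻¹) ^ 2) atTop (nhds c) := by
  have h2 : Tendsto (fun α : ℝ => (α⁻¹) ^ 2) atTop (nhds 0) := by
    simpa using aux_inv_tendsto.pow 2
  have : Tendsto (fun α : ℝ => c + d * α⁻¹ + e * (α⁻¹) ^ 2) atTop
      (nhds (c + d * 0 + e * 0)) :=
    (tendsto_const_nhds.add (tendsto_const_nhds.mul aux_inv_tendsto)).add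
      (tendsto_const_nhds.mul h2)
  simpa using this

set_option maxHeartbeats 2000000 in
/-- Closed form of `(1/2)‖u_α - z_d‖²_{L²(Ω₁)}` on the rectangle, together with
convergence of the coefficients `C_{iα} → C_i` as `α → ∞`. -/
theorem stmt_6 (x0 y0 g q b zd : ℝ) (hx0 : 0 < x0) (hy0 : 0 < y0)
    (uα : ℝ → ℝ → ℝ)
    (huα : uα = fun α x =>
      -g * x ^ 2 / 2 + (g * x0 - q) * x + (g * x0 - q) / α + b)
    (C1α C2α C3α C4α C5α C6α : ℝ → ℝ)
    (hC1 : C1α = fun α => 2 / 15 + 2 / (3 * α * x0) + 1 / (α ^ 2 * x0 ^ 2))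
    (hC2 : C2α = fun α => 1 / 3 + 1 / (α * x0) + 1 / (α ^ 2 * x0 ^ 2))
    (hC3 : C3α = fun _ => 1)
    (hC4 : C4α = fun α => -(5 / 12) - 5 / (3 * α * x0) - 2 / (α ^ 2 * x0 ^ 2))
    (hC5 : C5α = fun α => 2 / 3 + 2 / (α * x0))
    (hC6 : C6α = fun α => -1 - 2 / (α * x0)) :
    (∀ α : ℝ, 0 < α →
      (1 / 2) * (∫ _y in (0 : ℝ)..y0, ∫ x in (0 : ℝ)..x0, (uα α x - zd) ^ 2) =
        (y0 / 2) * (C1α α * g ^ 2 * x0 ^ 5 + C2α α * q ^ 2 * x0 ^ 3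
          + C3α α * x0 * (b - zd) ^ 2 + C4α α * g * q * x0 ^ 4
          + C5α α * g * x0 ^ 3 * (b - zd) + C6α α * q * x0 ^ 2 * (b - zd))) ∧
    Tendsto C1α atTop (nhds (2 / 15)) ∧
    Tendsto C2α atTop (nhds (1 / 3)) ∧
    Tendsto C3α atTop (nhds 1) ∧
    Tendsto C4α atTop (nhds (-(5 / 12))) ∧
    Tendsto C5α atTop (nhds (2 / 3)) ∧
    Tendsto C6α atTop (nhds (-1)) := by
  have hx0' : x0 ≠ 0 := ne_of_gt hx0
  refine ⟨?_, ?_, ?_, ?_, ?_, ?_, ?_⟩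
  · intro α hα
    have hα' : α ≠ 0 := ne_of_gt hα
    set A : ℝ := -g / 2 with hA
    set B : ℝ := g * x0 - q with hB
    set C : ℝ := (g * x0 - q) / α + b - zd with hC
    set F : ℝ → ℝ := fun x =>
      A ^ 2 / 5 * x ^ 5 + A * B / 2 * x ^ 4 + (B ^ 2 + 2 * A * C) / 3 * x ^ 3
        + B * C * x ^ 2 + C ^ 2 * x with hF
    have hderiv : ∀ x ∈ Set.uIcc (0 : ℝ) x0, HasDerivAt F ((uα α x - zd) ^ 2) x := by
      intro x _
      have h : HasDerivAt F
          (A ^ 2 / 5 * ((5 : ℕ) * x ^ (5 - 1)) + A * B / 2 * ((4 : ℕ) * x ^ (4 - 1))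
            + (B ^ 2 + 2 * A * C) / 3 * ((3 : ℕ) * x ^ (3 - 1))
            + B * C * ((2 : ℕ) * x ^ (2 - 1)) + C ^ 2 * 1) x :=
        (((((hasDerivAt_pow 5 x).const_mul (A ^ 2 / 5)).add
          ((hasDerivAt_pow 4 x).const_mul (A * B / 2))).add
          ((hasDerivAt_pow 3 x).const_mul ((B ^ 2 + 2 * A * C) / 3))).add
          ((hasDerivAt_pow 2 x).const_mul (B * C))).add
          ((hasDerivAt_id' x).const_mul (C ^ 2))
      refine h.congr_deriv ?_
      have hux : uα α x - zd = A * x ^ 2 + B * x + C := by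
        rw [huα, hA, hB, hC]; ring
      rw [hux]; push_cast; ring
    have hint : IntervalIntegrable (fun x => (uα α x - zd) ^ 2)
        MeasureTheory.volume 0 x0 := by
      rw [huα]
      exact (Continuous.intervalIntegrable (by continuity) 0 x0)
    have hinner : (∫ x in (0 : ℝ)..x0, (uα α x - zd) ^ 2) = F x0 - F 0 :=
      intervalIntegral.integral_eq_sub_of_hasDerivAt hderiv hint
    rw [intervalIntegral.integral_const, hinner, hC1, hC2, hC3, hC4, hC5, hC6, hF, hC, hB, hA]
    simp only [smul_eq_mul]
    field_simp
    ring
  · rw [hC1]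
    refine (aux_gen_tendsto (2 / 15) (2 / (3 * x0)) (1 / x0 ^ 2)).congr fun α => ?_
    simp only [div_eq_mul_inv, mul_inv, inv_pow]
    ring
  · rw [hC2]
    refine (aux_gen_tendsto (1 / 3) (1 / x0) (1 / x0 ^ 2)).congr fun α => ?_
    simp only [div_eq_mul_inv, mul_inv, inv_pow]
    ring
  · rw [hC3]; exact tendsto_const_nhds
  · rw [hC4]
    refine (aux_gen_tendsto (-(5 / 12)) (-(5 / (3 * x0))) (-(2 / x0 ^ 2))).congr fun α => ?_
    simp only [div_eq_mul_inv, mul_inv, inv_pow]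
    ring
  · rw [hC5]
    refine (aux_gen_tendsto (2 / 3) (2 / x0) 0).congr fun α => ?_
    simp only [div_eq_mul_inv, mul_inv, inv_pow]
    ring
  · rw [hC6]
    refine (aux_gen_tendsto (-1) (-(2 / x0)) 0).congr fun α => ?_
    simp only [div_eq_mul_inv, mul_inv, inv_pow]
    ring
end

section
/- Let x0 > 0, y0 > 0, M₁ > 0, α > 0 and q, b, z_d ∈ ℝ. For g ∈ ℝ define u_g(x) = -g·x²/2 + (g·x0 - q)·x + b and the cost J₁(g) = (y0/2)·∫₀^{x0} (u_g(x) - z_d)² dx + (M₁/2)·g²·x0·y0. Then J₁ attains its minimum over ℝ at the unique point g_op = -(C₄·q·x0 + C₅·(b - z_d)) / (2·x0²·(C₁ + M₁/x0⁴)), where C₁ = 2/15, C₄ = -5/12, C₅ = 2/3. Similarly, with u_{α,g}(x) = u_g(x) + (g·x0 - q)/α and J₁α(g) = (y0/2)·∫₀^{x0} (u_{α,g}(x) - z_d)² dx + (M₁/2)·g²·x0·y0, the functional J₁α attains its minimum over ℝ at the unique point g_{α,op} = -(C₄α·q·x0 + C₅α·(b - z_d)) / (2·x0²·(C₁α + M₁/x0⁴)),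 where C₁α = 2/15 + 2/(3·α·x0) + 1/(α²·x0²), C₄α = -5/12 - 5/(3·α·x0) - 2/(α²·x0²), C₅α = 2/3 + 2/(α·x0). -/
private lemma integ_sq (x0 a2 a1 a0 : ℝ) :
    (∫ x in (0:ℝ)..x0, (a2 * x ^ 2 + a1 * x + a0) ^ 2)
      = a2 ^ 2 * x0 ^ 5 / 5 + a2 * a1 * x0 ^ 4 / 2
        + (a1 ^ 2 + 2 * a2 * a0) * x0 ^ 3 / 3 + a1 * a0 * x0 ^ 2 + a0 ^ 2 * x0 := by
  have hder : ∀ x ∈ Set.uIcc (0:ℝ) x0,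
      HasDerivAt (fun x : ℝ => a2 ^ 2 * x ^ 5 / 5 + a2 * a1 * x ^ 4 / 2
        + (a1 ^ 2 + 2 * a2 * a0) * x ^ 3 / 3 + a1 * a0 * x ^ 2 + a0 ^ 2 * x)
        ((a2 * x ^ 2 + a1 * x + a0) ^ 2) x := by
    intro x _
    have h := (((((hasDerivAt_pow 5 x).const_mul (a2 ^ 2 / 5)).add
        ((hasDerivAt_pow 4 x).const_mul (a2 * a1 / 2))).add
        ((hasDerivAt_pow 3 x).const_mul ((a1 ^ 2 + 2 * a2 * a0) / 3))).add
        ((hasDerivAt_pow 2 x).const_mul (a1 * a0))).add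
        ((hasDerivAt_id x).const_mul (a0 ^ 2))
    convert h using 1
    · rfl
    · rfl
    · funext y; simp only [id, Pi.add_apply]; push_cast; ring
    · push_cast; ring
  have hint : IntervalIntegrable (fun x : ℝ => (a2 * x ^ 2 + a1 * x + a0) ^ 2)
      MeasureTheory.volume 0 x0 := by
    apply Continuous.intervalIntegrable; continuity
  rw [intervalIntegral.integral_eq_sub_of_hasDerivAt hder hint]
  ring

private lemma quad_min (A B C t : ℝ) (hA : 0 < A) (ht : 2 * A * t = -B) (f : ℝ → ℝ)
    (hf : ∀ g, f g = A * g ^ 2 + B * g + C) :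
    (∀ g : ℝ, f t ≤ f g) ∧ ∀ g : ℝ, g ≠ t → f t < f g := by
  have key : ∀ g, f g - f t = A * (g - t) ^ 2 := by
    intro g
    have hB : B = -(2 * A * t) := by linarith
    rw [hf, hf, hB]; ring
  constructor
  · intro g
    nlinarith [key g, sq_nonneg (g - t)]
  · intro g hg
    have h1 : 0 < (g - t) ^ 2 := by
      have : g - t ≠ 0 := sub_ne_zero.mpr hg
      positivity
    nlinarith [key g]

/-- Distributed optimal control on the constant internal energy `g` on the
rectangle: the cost functionals `J₁` and `J₁α` attain their minima over ℝ at the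
unique points `g_op` and `g_{α,op}` given by the closed formulas. -/
theorem stmt_7 (x0 y0 M1 α q b zd : ℝ)
    (hx0 : 0 < x0) (hy0 : 0 < y0) (hM1 : 0 < M1) (hα : 0 < α)
    (J1 J1α : ℝ → ℝ) (gop gαop : ℝ)
    (hJ1 : J1 = fun g =>
      (y0 / 2) * (∫ x in (0 : ℝ)..x0,
        ((-g * x ^ 2 / 2 + (g * x0 - q) * x + b) - zd) ^ 2)
      + M1 / 2 * g ^ 2 * x0 * y0)
    (hJ1α : J1α = fun g =>
      (y0 / 2) * (∫ x in (0 : ℝ)..x0,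
        ((-g * x ^ 2 / 2 + (g * x0 - q) * x + (g * x0 - q) / α + b) - zd) ^ 2)
      + M1 / 2 * g ^ 2 * x0 * y0)
    (hgop : gop = -((-(5 / 12)) * q * x0 + (2 / 3) * (b - zd)) /
      (2 * x0 ^ 2 * (2 / 15 + M1 / x0 ^ 4)))
    (hgαop : gαop = -((-(5 / 12) - 5 / (3 * α * x0) - 2 / (α ^ 2 * x0 ^ 2)) * q * x0
        + (2 / 3 + 2 / (α * x0)) * (b - zd)) /
      (2 * x0 ^ 2 * (2 / 15 + 2 / (3 * α * x0) + 1 / (α ^ 2 * x0 ^ 2) + M1 / x0 ^ 4))) :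
    ((∀ g : ℝ, J1 gop ≤ J1 g) ∧ ∀ g : ℝ, g ≠ gop → J1 gop < J1 g) ∧
    ((∀ g : ℝ, J1α gαop ≤ J1α g) ∧ ∀ g : ℝ, g ≠ gαop → J1α gαop < J1α g) := by
  have hx : x0 ≠ 0 := ne_of_gt hx0
  have ha : α ≠ 0 := ne_of_gt hα
  have hd1 : (2:ℝ) / 15 + M1 / x0 ^ 4 ≠ 0 := by positivity
  have hd2 : (2:ℝ) / 15 + 2 / (3 * α * x0) + 1 / (α ^ 2 * x0 ^ 2) + M1 / x0 ^ 4 ≠ 0 := by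
    positivity
  constructor
  · apply quad_min (y0 * (2 / 15 * x0 ^ 5 + M1 * x0) / 2)
      (y0 / 2 * (-(5 / 12) * q * x0 ^ 4 + 2 / 3 * (b - zd) * x0 ^ 3))
      (y0 / 2 * (q ^ 2 * x0 ^ 3 / 3 - q * (b - zd) * x0 ^ 2 + (b - zd) ^ 2 * x0))
    · positivity
    · rw [hgop]; field_simp
    · intro g
      rw [hJ1]
      have heq : (∫ x in (0:ℝ)..x0, ((-g * x ^ 2 / 2 + (g * x0 - q) * x + b) - zd) ^ 2)
          = ∫ x in (0:ℝ)..x0, ((-g / 2) * x ^ 2 + (g * x0 - q) * x + (b - zd)) ^ 2 := by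
        apply intervalIntegral.integral_congr
        intro x _; ring
      beta_reduce
      rw [heq, integ_sq]
      ring
  · apply quad_min (y0 / 2 * (2 / 15 * x0 ^ 5 + 2 * x0 ^ 4 / (3 * α) + x0 ^ 3 / α ^ 2 + M1 * x0))
      (y0 / 2 * (-(5 / 12) * q * x0 ^ 4 - 5 / 3 * q * x0 ^ 3 / α - 2 * q * x0 ^ 2 / α ^ 2
        + (b - zd) * (2 / 3 * x0 ^ 3 + 2 * x0 ^ 2 / α)))
      (y0 / 2 * (q ^ 2 * x0 ^ 3 / 3 + q ^ 2 * x0 ^ 2 / α - q * (b - zd) * x0 ^ 2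
        + ((b - zd) - q / α) ^ 2 * x0))
    · positivity
    · rw [hgαop]; field_simp
    · intro g
      rw [hJ1α]
      have heq : (∫ x in (0:ℝ)..x0,
          ((-g * x ^ 2 / 2 + (g * x0 - q) * x + (g * x0 - q) / α + b) - zd) ^ 2)
          = ∫ x in (0:ℝ)..x0,
            ((-g / 2) * x ^ 2 + (g * x0 - q) * x + ((g * x0 - q) / α + (b - zd))) ^ 2 := by
        apply intervalIntegral.integral_congr
        intro x _; ring
      beta_reduce
      rw [heq, integ_sq]
      ring
end

section
/- Let x0 > 0, y0 > 0, M₂ > 0, α > 0 and g, b, z_d ∈ ℝ. For q ∈ ℝ define u_q(x) = -g·x²/2 + (g·x0 - q)·x + b and the cost J₂(q) = (y0/2)·∫₀^{x0} (u_q(x) - z_d)² dx + (M₂/2)·q²·y0. Then J₂ attains its minimum over ℝ at the unique point q_op = -(C₄·g·x0² + C₆·(b - z_d)) / (2·x0·(C₂ + M₂/x0³)), where C₂ = 1/3, C₄ = -5/12, C₆ = -1. Similarly, with u_{α,q}(x) = u_q(x) + (g·x0 - q)/α and J₂α(q) = (y0/2)·∫₀^{x0} (u_{α,q}(x) - z_d)²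 dx + (M₂/2)·q²·y0, the functional J₂α attains its minimum over ℝ at the unique point q_{α,op} = -(C₄α·g·x0² + C₆α·(b - z_d)) / (2·x0·(C₂α + M₂/x0³)), where C₂α = 1/3 + 1/(α·x0) + 1/(α²·x0²), C₄α = -5/12 - 5/(3·α·x0) - 2/(α²·x0²), C₆α = -1 - 2/(α·x0). -/
lemma integral_sq_quad (A2 A1 A0 X : ℝ) :
    (∫ x in (0:ℝ)..X, (A2*x^2 + A1*x + A0)^2)
      = A2^2*X^5/5 + A2*A1*X^4/2 + (A1^2+2*A2*A0)*X^3/3 + A1*A0*X^2 + A0^2*X := by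
  have h : ∀ x ∈ Set.uIcc (0:ℝ) X,
      HasDerivAt (fun t => A2^2*t^5/5 + A2*A1*t^4/2 + (A1^2+2*A2*A0)*t^3/3
        + A1*A0*t^2 + A0^2*t) ((A2*x^2 + A1*x + A0)^2) x := by
    intro x _
    have H := (((((hasDerivAt_pow 5 x).const_mul (A2^2)).div_const 5).add
      (((hasDerivAt_pow 4 x).const_mul (A2*A1)).div_const 2)).add
      (((hasDerivAt_pow 3 x).const_mul (A1^2+2*A2*A0)).div_const 3)).add
      (((hasDerivAt_pow 2 x).const_mul (A1*A0)).add
        ((hasDerivAt_pow 1 x).const_mul (A0^2)))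
    convert H using 1
    · rfl
    · rfl
    · ext t; simp only [Pi.add_apply]; ring
    · push_cast; ring
  rw [intervalIntegral.integral_eq_sub_of_hasDerivAt h
    ((by continuity : Continuous fun x : ℝ => (A2*x^2 + A1*x + A0)^2).intervalIntegrable 0 X)]
  ring

lemma quad_min_s8 (f : ℝ → ℝ) (a q0 : ℝ) (ha : 0 < a)
    (hf : ∀ q, f q - f q0 = a * (q - q0)^2) :
    (∀ q : ℝ, f q0 ≤ f q) ∧ ∀ q : ℝ, q ≠ q0 → f q0 < f q := by
  constructor
  · intro q; nlinarith [hf q, sq_nonneg (q - q0)]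
  · intro q hq
    have hne : q - q0 ≠ 0 := sub_ne_zero.mpr hq
    have : 0 < (q - q0)^2 := by positivity
    nlinarith [hf q]

/-- Boundary optimal control on the constant heat flux `q` on `Γ₂` for the
rectangle: the cost functionals `J₂` and `J₂α` attain their minima over ℝ at the
unique points `q_op` and `q_{α,op}` given by the closed formulas. -/
theorem stmt_8 (x0 y0 M2 α g b zd : ℝ)
    (hx0 : 0 < x0) (hy0 : 0 < y0) (hM2 : 0 < M2) (hα : 0 < α)
    (J2 J2α : ℝ → ℝ) (qop qαop : ℝ)
    (hJ2 : J2 = fun q =>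
      (y0 / 2) * (∫ x in (0 : ℝ)..x0,
        ((-g * x ^ 2 / 2 + (g * x0 - q) * x + b) - zd) ^ 2)
      + M2 / 2 * q ^ 2 * y0)
    (hJ2α : J2α = fun q =>
      (y0 / 2) * (∫ x in (0 : ℝ)..x0,
        ((-g * x ^ 2 / 2 + (g * x0 - q) * x + (g * x0 - q) / α + b) - zd) ^ 2)
      + M2 / 2 * q ^ 2 * y0)
    (hqop : qop = -((-(5 / 12)) * g * x0 ^ 2 + (-1) * (b - zd)) /
      (2 * x0 * (1 / 3 + M2 / x0 ^ 3)))
    (hqαop : qαop = -((-(5 / 12) - 5 / (3 * α * x0) - 2 / (α ^ 2 * x0 ^ 2)) * g * x0 ^ 2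
        + (-1 - 2 / (α * x0)) * (b - zd)) /
      (2 * x0 * (1 / 3 + 1 / (α * x0) + 1 / (α ^ 2 * x0 ^ 2) + M2 / x0 ^ 3))) :
    ((∀ q : ℝ, J2 qop ≤ J2 q) ∧ ∀ q : ℝ, q ≠ qop → J2 qop < J2 q) ∧
    ((∀ q : ℝ, J2α qαop ≤ J2α q) ∧ ∀ q : ℝ, q ≠ qαop → J2α qαop < J2α q) := by
  have hx0' : x0 ≠ 0 := ne_of_gt hx0
  have hα' : α ≠ 0 := ne_of_gt hα
  have hd1 : (1 / 3 + M2 / x0 ^ 3 : ℝ) ≠ 0 := by positivity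
  have hd2 : (1 / 3 + 1 / (α * x0) + 1 / (α ^ 2 * x0 ^ 2) + M2 / x0 ^ 3 : ℝ) ≠ 0 := by
    positivity
  have ev1 : ∀ q : ℝ, J2 q = (y0/2)*((-g/2)^2*x0^5/5 + (-g/2)*(g*x0-q)*x0^4/2
      + ((g*x0-q)^2+2*(-g/2)*(b-zd))*x0^3/3 + (g*x0-q)*(b-zd)*x0^2 + (b-zd)^2*x0)
      + M2/2*q^2*y0 := by
    intro q
    simp only [hJ2]
    have e : (∫ x in (0:ℝ)..x0, ((-g * x ^ 2 / 2 + (g * x0 - q) * x + b) - zd) ^ 2)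
        = ∫ x in (0:ℝ)..x0, ((-g/2)*x^2 + (g*x0-q)*x + (b-zd))^2 := by
      apply intervalIntegral.integral_congr; intro x _; ring
    rw [e, integral_sq_quad]
  have ev2 : ∀ q : ℝ, J2α q = (y0/2)*((-g/2)^2*x0^5/5
      + (-g/2)*(g*x0-q)*x0^4/2
      + ((g*x0-q)^2+2*(-g/2)*((g*x0-q)/α + b - zd))*x0^3/3
      + (g*x0-q)*((g*x0-q)/α + b - zd)*x0^2 + ((g*x0-q)/α + b - zd)^2*x0)
      + M2/2*q^2*y0 := by
    intro q
    simp only [hJ2α]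
    have e : (∫ x in (0:ℝ)..x0,
          ((-g * x ^ 2 / 2 + (g * x0 - q) * x + (g * x0 - q) / α + b) - zd) ^ 2)
        = ∫ x in (0:ℝ)..x0, ((-g/2)*x^2 + (g*x0-q)*x + ((g*x0-q)/α + b - zd))^2 := by
      apply intervalIntegral.integral_congr; intro x _; ring
    rw [e, integral_sq_quad]
  constructor
  · apply quad_min_s8 J2 (y0/2*(x0^3/3 + M2)) qop (by positivity)
    intro q
    rw [ev1 q, ev1 qop]
    have key : 2*(y0/2*(x0^3/3 + M2))*qop
        + y0/2 * (g*x0^4/4 - 2*g*x0^4/3 - (b-zd)*x0^2) = 0 := by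
      rw [hqop]
      field_simp
      ring
    linear_combination (q - qop) * key
  · apply quad_min_s8 J2α (y0/2*(x0^3/3 + x0^2/α + x0/α^2 + M2)) qαop (by positivity)
    intro q
    rw [ev2 q, ev2 qαop]
    have key : 2*(y0/2*(x0^3/3 + x0^2/α + x0/α^2 + M2))*qαop
        + y0/2 * (g*x0^4/4 - 2*g*x0^4/3 + g*x0^3/(3*α) - 2*g*x0^3/α
          - (b-zd)*x0^2 - 2*g*x0^2/α^2 - 2*(b-zd)*x0/α) = 0 := by
      rw [hqαop]
      field_simp
      ring
    linear_combination (q - qαop) * key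
end

section
/- Let x0 > 0, y0 > 0, M₃ > 0, α > 0 and g, q, z_d ∈ ℝ. For b ∈ ℝ define u_b(x) = -g·x²/2 + (g·x0 - q)·x + b and the cost J₃(b) = (y0/2)·∫₀^{x0} (u_b(x) - z_d)² dx + (M₃/2)·b²·y0. Then J₃ attains its minimum over ℝ at the unique point b_op = -(C₅·g·x0² + C₆·q·x0 - 2·C₃·z_d) / (2·(C₃ + M₃/x0)), where C₃ = 1, C₅ = 2/3, C₆ = -1. Similarly, with u_{α,b}(x) = u_b(x) + (g·x0 - q)/α and J₃α(b) = (y0/2)·∫₀^{x0} (u_{α,b}(x) - z_d)² dx + (M₃/2)·b²·y0, the functional J₃α attains its minimum over ℝ at the unique point b_{α,op} = -(C₅α·g·x0² + C₆α·q·x0 - 2·C₃α·z_d) / (2·(C₃α + M₃/x0)), where C₃α = 1, C₅α = 2/3 + 2/(α·x0), C₆α = -1 - 2/(α·x0). -/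
lemma integ_quad_sq (A B C x0 : ℝ) :
    ∫ x in (0 : ℝ)..x0, (A * x ^ 2 + B * x + C) ^ 2
      = A ^ 2 * x0 ^ 5 / 5 + A * B * x0 ^ 4 / 2 + (B ^ 2 + 2 * A * C) * x0 ^ 3 / 3
        + B * C * x0 ^ 2 + C ^ 2 * x0 := by
  have h : ∀ x ∈ Set.uIcc (0 : ℝ) x0, HasDerivAt
      (fun t : ℝ => A ^ 2 * t ^ 5 / 5 + A * B * t ^ 4 / 2
        + (B ^ 2 + 2 * A * C) * t ^ 3 / 3 + B * C * t ^ 2 + C ^ 2 * t)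
      ((A * x ^ 2 + B * x + C) ^ 2) x := by
    intro x _
    have h1 := ((((hasDerivAt_pow 5 x).const_mul (A ^ 2)).div_const 5).add
      (((hasDerivAt_pow 4 x).const_mul (A * B)).div_const 2)).add
      ((((hasDerivAt_pow 3 x).const_mul (B ^ 2 + 2 * A * C)).div_const 3).add
        (((hasDerivAt_pow 2 x).const_mul (B * C)).add ((hasDerivAt_id x).const_mul (C ^ 2))))
    convert h1 using 1
    · rfl
    · rfl
    · ext t; simp only [id_eq, Pi.add_apply]; ring
    · push_cast; ring
  have hc : IntervalIntegrable (fun x : ℝ => (A * x ^ 2 + B * x + C) ^ 2)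
      MeasureTheory.volume 0 x0 := (by fun_prop : Continuous fun x : ℝ =>
        (A * x ^ 2 + B * x + C) ^ 2).intervalIntegrable 0 x0
  rw [intervalIntegral.integral_eq_sub_of_hasDerivAt h hc]
  ring

lemma quad_min_s9 (K m c : ℝ) (hK : 0 < K) (f : ℝ → ℝ)
    (hf : ∀ b, f b = K * (b - m) ^ 2 + c) :
    (∀ b, f m ≤ f b) ∧ ∀ b, b ≠ m → f m < f b := by
  constructor
  · intro b; rw [hf, hf]; nlinarith [sq_nonneg (b - m)]
  · intro b hb; rw [hf, hf]
    have hbm : b - m ≠ 0 := sub_ne_zero.mpr hb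
    have : 0 < (b - m) ^ 2 := by positivity
    nlinarith

set_option maxHeartbeats 1000000 in
/-- Boundary optimal control on the constant temperature `b` for the rectangle:
the cost functionals `J₃` and `J₃α` attain their minima over ℝ at the unique
points `b_op` and `b_{α,op}` given by the closed formulas. -/
theorem stmt_9 (x0 y0 M3 α g q zd : ℝ)
    (hx0 : 0 < x0) (hy0 : 0 < y0) (hM3 : 0 < M3) (hα : 0 < α)
    (J3 J3α : ℝ → ℝ) (bop bαop : ℝ)
    (hJ3 : J3 = fun b =>
      (y0 / 2) * (∫ x in (0 : ℝ)..x0,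
        ((-g * x ^ 2 / 2 + (g * x0 - q) * x + b) - zd) ^ 2)
      + M3 / 2 * b ^ 2 * y0)
    (hJ3α : J3α = fun b =>
      (y0 / 2) * (∫ x in (0 : ℝ)..x0,
        ((-g * x ^ 2 / 2 + (g * x0 - q) * x + (g * x0 - q) / α + b) - zd) ^ 2)
      + M3 / 2 * b ^ 2 * y0)
    (hbop : bop = -((2 / 3) * g * x0 ^ 2 + (-1) * q * x0 - 2 * 1 * zd) /
      (2 * (1 + M3 / x0)))
    (hbαop : bαop = -((2 / 3 + 2 / (α * x0)) * g * x0 ^ 2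
        + (-1 - 2 / (α * x0)) * q * x0 - 2 * 1 * zd) /
      (2 * (1 + M3 / x0))) :
    ((∀ b : ℝ, J3 bop ≤ J3 b) ∧ ∀ b : ℝ, b ≠ bop → J3 bop < J3 b) ∧
    ((∀ b : ℝ, J3α bαop ≤ J3α b) ∧ ∀ b : ℝ, b ≠ bαop → J3α bαop < J3α b) := by
  have hK : 0 < y0 / 2 * (x0 + M3) := by positivity
  have hx0' : x0 ≠ 0 := ne_of_gt hx0
  have hα' : α ≠ 0 := ne_of_gt hα
  have hden : (2 * (1 + M3 / x0)) ≠ 0 := by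
    have : 0 < 1 + M3 / x0 := by positivity
    positivity
  have hint : ∀ b : ℝ, (∫ x in (0 : ℝ)..x0,
      ((-g * x ^ 2 / 2 + (g * x0 - q) * x + b) - zd) ^ 2)
      = (-g/2) ^ 2 * x0 ^ 5 / 5 + (-g/2) * (g * x0 - q) * x0 ^ 4 / 2
        + ((g * x0 - q) ^ 2 + 2 * (-g/2) * (b - zd)) * x0 ^ 3 / 3
        + (g * x0 - q) * (b - zd) * x0 ^ 2 + (b - zd) ^ 2 * x0 := by
    intro b
    have := integ_quad_sq (-g/2) (g * x0 - q) (b - zd) x0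
    rw [← this]
    congr 1; ext x; ring
  have hintα : ∀ b : ℝ, (∫ x in (0 : ℝ)..x0,
      ((-g * x ^ 2 / 2 + (g * x0 - q) * x + (g * x0 - q) / α + b) - zd) ^ 2)
      = (-g/2) ^ 2 * x0 ^ 5 / 5 + (-g/2) * (g * x0 - q) * x0 ^ 4 / 2
        + ((g * x0 - q) ^ 2 + 2 * (-g/2) * ((g * x0 - q) / α + b - zd)) * x0 ^ 3 / 3
        + (g * x0 - q) * ((g * x0 - q) / α + b - zd) * x0 ^ 2
        + ((g * x0 - q) / α + b - zd) ^ 2 * x0 := by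
    intro b
    have := integ_quad_sq (-g/2) (g * x0 - q) ((g * x0 - q) / α + b - zd) x0
    rw [← this]
    congr 1; ext x; ring
  constructor
  · apply quad_min_s9 _ _ (J3 bop) hK
    intro b
    rw [hJ3]
    simp only
    rw [hint b, hint bop, hbop]
    field_simp
    ring
  · apply quad_min_s9 _ _ (J3α bαop) hK
    intro b
    rw [hJ3α]
    simp only
    rw [hintα b, hintα bαop, hbαop]
    field_simp
    ring
end

section
/- Let x0 > 0, y0 > 0, M₄ > 0, M₅ > 0, α > 0 and b, z_d ∈ ℝ. For (g,q) ∈ ℝ² define u_{(g,q)}(x) = -g·x²/2 + (g·x0 - q)·x + b and the cost J₄(g,q) = (y0/2)·∫₀^{x0} (u_{(g,q)}(x) - z_d)² dx + (M₄/2)·g²·x0·y0 + (M₅/2)·q²·y0. Then J₄ attains its minimum over ℝ² at the unique point (g^op, q^op) = ( (b - z_d)·Δ₁/x0² , (b - z_d)·Π₁/x0 ), where, with C₁ = 2/15, C₂ = 1/3, C₄ = -5/12, C₅ = 2/3, C₆ = -1: Δ₁ = (C₄·C₆ - 2·C₅·(C₂ + M₅/x0³)) / (4·(C₁ + M₄/x0⁴)·(C₂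 + M₅/x0³) - C₄²) and Π₁ = (C₄·C₅ - 2·C₆·(C₁ + M₄/x0⁴)) / (4·(C₁ + M₄/x0⁴)·(C₂ + M₅/x0³) - C₄²). The analogous statement holds for J₄α built from u_{α,(g,q)}(x) = u_{(g,q)}(x) + (g·x0 - q)/α: its unique minimizer is (g_α^op, q_α^op) = ( (b - z_d)·Δ₁α/x0² , (b - z_d)·Π₁α/x0 ) where Δ₁α, Π₁α are obtained from Δ₁, Π₁ by replacing C_i by C_{iα}, with C₁α = 2/15 + 2/(3·α·x0) + 1/(α²·x0²), C₂α = 1/3 + 1/(α·x0) + 1/(α²·x0²), C₄α = -5/12 - 5/(3·α·x0) - 2/(α²·x0²), C₅α = 2/3 + 2/(α·x0), C₆α = -1 - 2/(α·x0). -/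
set_option maxHeartbeats 1000000

lemma int_sq (a1 a2 a3 T : ℝ) :
    (∫ x in (0:ℝ)..T, (a1*x^2 + a2*x + a3)^2)
      = a1^2*T^5/5 + a1*a2*T^4/2 + (a2^2+2*a1*a3)*T^3/3 + a2*a3*T^2 + a3^2*T := by
  have h : ∀ x : ℝ, HasDerivAt (fun y : ℝ =>
      a1^2/5*y^5 + a1*a2/2*y^4 + (a2^2+2*a1*a3)/3*y^3 + a2*a3*y^2 + a3^2*y^1)
      ((a1*x^2 + a2*x + a3)^2) x := by
    intro x
    have H := (((((hasDerivAt_pow 5 x).const_mul (a1^2/5)).add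
      ((hasDerivAt_pow 4 x).const_mul (a1*a2/2))).add
      ((hasDerivAt_pow 3 x).const_mul ((a2^2+2*a1*a3)/3))).add
      ((hasDerivAt_pow 2 x).const_mul (a2*a3))).add
      ((hasDerivAt_pow 1 x).const_mul (a3^2))
    refine H.congr_deriv ?_
    push_cast; ring
  rw [intervalIntegral.integral_eq_sub_of_hasDerivAt (fun x _ => h x)
    (by apply Continuous.intervalIntegrable; fun_prop)]
  ring

lemma min_of_quad (Q : ℝ → ℝ → ℝ) (A B C D E Fc g0 q0 : ℝ)
    (hQ : ∀ g q, Q g q = A*g^2 + B*g*q + C*q^2 + D*g + E*q + Fc)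
    (hA : 0 < A) (hd : 0 < 4*A*C - B^2)
    (hg0 : (4*A*C - B^2)*g0 = B*E - 2*C*D)
    (hq0 : (4*A*C - B^2)*q0 = B*D - 2*A*E) :
    (∀ g q, Q g0 q0 ≤ Q g q) ∧ ∀ g q, (g, q) ≠ (g0, q0) → Q g0 q0 < Q g q := by
  have hc1 : 2*A*g0 + B*q0 + D = 0 := by
    have hX : (4*A*C - B^2) * (2*A*g0 + B*q0 + D) = 0 := by
      linear_combination 2*A*hg0 + B*hq0
    exact (mul_eq_zero.1 hX).resolve_left hd.ne'
  have hc2 : B*g0 + 2*C*q0 + E = 0 := by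
    have hX : (4*A*C - B^2) * (B*g0 + 2*C*q0 + E) = 0 := by
      linear_combination B*hg0 + 2*C*hq0
    exact (mul_eq_zero.1 hX).resolve_left hd.ne'
  have key : ∀ g q : ℝ, Q g q - Q g0 q0
      = A*(g-g0)^2 + B*(g-g0)*(q-q0) + C*(q-q0)^2 := by
    intro g q
    linear_combination (hQ g q) - (hQ g0 q0) + (g-g0)*hc1 + (q-q0)*hc2
  constructor
  · intro g q
    nlinarith [key g q, sq_nonneg (2*A*(g-g0) + B*(q-q0)),
      mul_nonneg hd.le (sq_nonneg (q-q0)), hA]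
  · intro g q hne
    by_cases hq : q = q0
    · have hg : g ≠ g0 := fun h => hne (by rw [h, hq])
      have hg' : g - g0 ≠ 0 := sub_ne_zero.2 hg
      have h1 : 0 < (g - g0)^2 := by positivity
      rw [hq]; nlinarith [key g q0, mul_pos hA h1]
    · have hq' : q - q0 ≠ 0 := sub_ne_zero.2 hq
      have h1 : 0 < (q - q0)^2 := by positivity
      nlinarith [key g q, sq_nonneg (2*A*(g-g0) + B*(q-q0)), mul_pos hd h1, hA]


/-- Simultaneous distributed-boundary optimal control on `(g, q)` for the
rectangle: `J₄` and `J₄α` attain their minima over ℝ² at the unique points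
`(g^op, q^op)` and `(g_α^op, q_α^op)` given by the closed formulas. -/
theorem stmt_10 (x0 y0 M4 M5 α b zd : ℝ)
    (hx0 : 0 < x0) (hy0 : 0 < y0) (hM4 : 0 < M4) (hM5 : 0 < M5) (hα : 0 < α)
    (J4 J4α : ℝ → ℝ → ℝ) (gop qop gαop qαop : ℝ)
    (hJ4 : J4 = fun g q =>
      (y0 / 2) * (∫ x in (0 : ℝ)..x0,
        ((-g * x ^ 2 / 2 + (g * x0 - q) * x + b) - zd) ^ 2)
      + M4 / 2 * g ^ 2 * x0 * y0 + M5 / 2 * q ^ 2 * y0)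
    (hJ4α : J4α = fun g q =>
      (y0 / 2) * (∫ x in (0 : ℝ)..x0,
        ((-g * x ^ 2 / 2 + (g * x0 - q) * x + (g * x0 - q) / α + b) - zd) ^ 2)
      + M4 / 2 * g ^ 2 * x0 * y0 + M5 / 2 * q ^ 2 * y0)
    (hgop : gop = (b - zd) / x0 ^ 2 *
      (((-(5 / 12)) * (-1) - 2 * (2 / 3) * (1 / 3 + M5 / x0 ^ 3)) /
        (4 * (2 / 15 + M4 / x0 ^ 4) * (1 / 3 + M5 / x0 ^ 3) - (-(5 / 12)) ^ 2)))
    (hqop : qop = (b - zd) / x0 *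
      (((-(5 / 12)) * (2 / 3) - 2 * (-1) * (2 / 15 + M4 / x0 ^ 4)) /
        (4 * (2 / 15 + M4 / x0 ^ 4) * (1 / 3 + M5 / x0 ^ 3) - (-(5 / 12)) ^ 2)))
    (hgαop : gαop = (b - zd) / x0 ^ 2 *
      (((-(5 / 12) - 5 / (3 * α * x0) - 2 / (α ^ 2 * x0 ^ 2)) * (-1 - 2 / (α * x0))
          - 2 * (2 / 3 + 2 / (α * x0))
            * (1 / 3 + 1 / (α * x0) + 1 / (α ^ 2 * x0 ^ 2) + M5 / x0 ^ 3)) /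
        (4 * (2 / 15 + 2 / (3 * α * x0) + 1 / (α ^ 2 * x0 ^ 2) + M4 / x0 ^ 4)
            * (1 / 3 + 1 / (α * x0) + 1 / (α ^ 2 * x0 ^ 2) + M5 / x0 ^ 3)
          - (-(5 / 12) - 5 / (3 * α * x0) - 2 / (α ^ 2 * x0 ^ 2)) ^ 2)))
    (hqαop : qαop = (b - zd) / x0 *
      (((-(5 / 12) - 5 / (3 * α * x0) - 2 / (α ^ 2 * x0 ^ 2)) * (2 / 3 + 2 / (α * x0))
          - 2 * (-1 - 2 / (α * x0))
            * (2 / 15 + 2 / (3 * α * x0) + 1 / (α ^ 2 * x0 ^ 2) + M4 / x0 ^ 4)) /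
        (4 * (2 / 15 + 2 / (3 * α * x0) + 1 / (α ^ 2 * x0 ^ 2) + M4 / x0 ^ 4)
            * (1 / 3 + 1 / (α * x0) + 1 / (α ^ 2 * x0 ^ 2) + M5 / x0 ^ 3)
          - (-(5 / 12) - 5 / (3 * α * x0) - 2 / (α ^ 2 * x0 ^ 2)) ^ 2))) :
    ((∀ g q : ℝ, J4 gop qop ≤ J4 g q) ∧
      ∀ g q : ℝ, (g, q) ≠ (gop, qop) → J4 gop qop < J4 g q) ∧
    ((∀ g q : ℝ, J4α gαop qαop ≤ J4α g q) ∧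
      ∀ g q : ℝ, (g, q) ≠ (gαop, qαop) → J4α gαop qαop < J4α g q) := by

  have hx : x0 ≠ 0 := hx0.ne'
  have ha : α ≠ 0 := hα.ne'
  have cancel : ∀ k e n d : ℝ, d ≠ 0 → (k*d)*(e*(n/d)) = k*e*n := by
    intro k e n d hd; field_simp
  set c := b - zd with hc
  constructor
  · -- non-α case
    set A := y0*x0^5/15 + M4*x0*y0/2 with hA
    set B := -(5*y0*x0^4)/24 with hB
    set C := y0*x0^3/6 + M5*y0/2 with hC
    set D := y0*c*x0^3/3 with hD
    set E := -(y0*c*x0^2)/2 with hE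
    set Fc := y0*c^2*x0/2 with hF
    have hdin : (0:ℝ) < 4 * (2 / 15 + M4 / x0 ^ 4) * (1 / 3 + M5 / x0 ^ 3) - (-(5 / 12)) ^ 2 := by
      have h : 4 * (2 / 15 + M4 / x0 ^ 4) * (1 / 3 + M5 / x0 ^ 3) - (-(5 / 12):ℝ) ^ 2
          = 1/240 + 4/3*(M4/x0^4) + 8/15*(M5/x0^3) + 4*(M4/x0^4)*(M5/x0^3) := by
        ring
      rw [h]; positivity
    have heq : 4*A*C - B^2 = y0^2*x0^8/4 *
        (4 * (2 / 15 + M4 / x0 ^ 4) * (1 / 3 + M5 / x0 ^ 3) - (-(5 / 12)) ^ 2) := by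
      rw [hA, hB, hC]; field_simp; ring
    have hApos : 0 < A := by rw [hA]; positivity
    have hdpos : 0 < 4*A*C - B^2 := by rw [heq]; positivity
    have hQ : ∀ g q : ℝ, J4 g q = A*g^2 + B*g*q + C*q^2 + D*g + E*q + Fc := by
      intro g q
      rw [hJ4]
      have h1 : (∫ x in (0:ℝ)..x0, ((-g * x ^ 2 / 2 + (g * x0 - q) * x + b) - zd) ^ 2)
          = ∫ x in (0:ℝ)..x0, ((-g/2)*x^2 + (g*x0-q)*x + c)^2 := by
        apply intervalIntegral.integral_congr
        intro x _
        rw [hc]; ring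
      simp only
      rw [h1, int_sq, hA, hB, hC, hD, hE, hF]
      ring
    exact min_of_quad J4 A B C D E Fc gop qop hQ hApos hdpos
      (by rw [heq, hgop, cancel _ _ _ _ hdin.ne', hB, hC, hD, hE]; field_simp; ring)
      (by rw [heq, hqop, cancel _ _ _ _ hdin.ne', hA, hB, hD, hE]; field_simp; ring)
  · -- α case
    set A := y0/2*(2*x0^5/15 + 2*x0^4/(3*α) + x0^3/α^2) + M4*x0*y0/2 with hA
    set B := y0/2*(-(5*x0^4)/12 - 5*x0^3/(3*α) - 2*x0^2/α^2) with hB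
    set C := y0/2*(x0^3/3 + x0^2/α + x0/α^2) + M5*y0/2 with hC
    set D := y0/2*c*(2*x0^3/3 + 2*x0^2/α) with hD
    set E := y0/2*c*(-x0^2 - 2*x0/α) with hE
    set Fc := y0/2*c^2*x0 with hF
    have hdin : (0:ℝ) <
        4 * (2 / 15 + 2 / (3 * α * x0) + 1 / (α ^ 2 * x0 ^ 2) + M4 / x0 ^ 4)
            * (1 / 3 + 1 / (α * x0) + 1 / (α ^ 2 * x0 ^ 2) + M5 / x0 ^ 3)
          - (-(5 / 12) - 5 / (3 * α * x0) - 2 / (α ^ 2 * x0 ^ 2)) ^ 2 := by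
      have h : 4 * (2 / 15 + 2 / (3 * α * x0) + 1 / (α ^ 2 * x0 ^ 2) + M4 / x0 ^ 4)
            * (1 / 3 + 1 / (α * x0) + 1 / (α ^ 2 * x0 ^ 2) + M5 / x0 ^ 3)
          - (-(5 / 12) - 5 / (3 * α * x0) - 2 / (α ^ 2 * x0 ^ 2):ℝ) ^ 2
          = 1/240 + 1/(30*α*x0) + 4/(45*α^2*x0^2)
            + 4*(M4/x0^4)*(1/3 + 1/(α*x0) + 1/(α^2*x0^2))
            + 4*(M5/x0^3)*(2/15 + 2/(3*α*x0) + 1/(α^2*x0^2))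
            + 4*(M4/x0^4)*(M5/x0^3) := by
        ring
      rw [h]; positivity
    have heq : 4*A*C - B^2 = y0^2*x0^8/4 *
        (4 * (2 / 15 + 2 / (3 * α * x0) + 1 / (α ^ 2 * x0 ^ 2) + M4 / x0 ^ 4)
            * (1 / 3 + 1 / (α * x0) + 1 / (α ^ 2 * x0 ^ 2) + M5 / x0 ^ 3)
          - (-(5 / 12) - 5 / (3 * α * x0) - 2 / (α ^ 2 * x0 ^ 2)) ^ 2) := by
      rw [hA, hB, hC]; field_simp; ring
    have hApos : 0 < A := by rw [hA]; positivity
    have hdpos : 0 < 4*A*C - B^2 := by rw [heq]; positivity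
    have hQ : ∀ g q : ℝ, J4α g q = A*g^2 + B*g*q + C*q^2 + D*g + E*q + Fc := by
      intro g q
      rw [hJ4α]
      have h1 : (∫ x in (0:ℝ)..x0,
            ((-g * x ^ 2 / 2 + (g * x0 - q) * x + (g * x0 - q) / α + b) - zd) ^ 2)
          = ∫ x in (0:ℝ)..x0, ((-g/2)*x^2 + (g*x0-q)*x + ((g*x0-q)/α + c))^2 := by
        apply intervalIntegral.integral_congr
        intro x _
        rw [hc]; ring
      simp only
      rw [h1, int_sq, hA, hB, hC, hD, hE, hF]
      field_simp
      ring
    exact min_of_quad J4α A B C D E Fc gαop qαop hQ hApos hdpos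
      (by rw [heq, hgαop, cancel _ _ _ _ hdin.ne', hB, hC, hD, hE]; field_simp; ring)
      (by rw [heq, hqαop, cancel _ _ _ _ hdin.ne', hA, hB, hD, hE]; field_simp; ring)
end

section
/- Let x0 > 0, M₃ > 0, α > 0 and g, q, z_d ∈ ℝ. Define b_op = -(C₅·g·x0² + C₆·q·x0 - 2·C₃·z_d) / (2·(C₃ + M₃/x0)) with C₃ = 1, C₅ = 2/3, C₆ = -1, and b_{α,op} = -(C₅α·g·x0² + C₆α·q·x0 - 2·C₃α·z_d) / (2·(C₃α + M₃/x0)) with C₃α = 1, C₅α = 2/3 + 2/(α·x0), C₆α = -1 - 2/(α·x0). Then exactly |b_{α,op} - b_op| = (1/α)·x0·|q - g·x0| / (M₃ + x0). In particular b_{α,op} → b_op as α → ∞ with lim_{α→∞} α·|b_{α,op} - b_op| = x0·|q - g·x0|/(M₃ + x0), so the order of convergence is exactly 1/α (when q ≠ g·x0). -/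
open Filter

/-- Exact order of convergence `1/α` of the optimal boundary control
`b_{α,op} → b_op` on the rectangle. -/
theorem stmt_11 (x0 M3 g q zd : ℝ) (hx0 : 0 < x0) (hM3 : 0 < M3)
    (bop : ℝ) (bαop : ℝ → ℝ)
    (hbop : bop = -((2 / 3) * g * x0 ^ 2 + (-1) * q * x0 - 2 * 1 * zd) /
      (2 * (1 + M3 / x0)))
    (hbαop : bαop = fun α =>
      -((2 / 3 + 2 / (α * x0)) * g * x0 ^ 2 + (-1 - 2 / (α * x0)) * q * x0
          - 2 * 1 * zd) / (2 * (1 + M3 / x0))) :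
    (∀ α : ℝ, 0 < α →
      |bαop α - bop| = (1 / α) * x0 * |q - g * x0| / (M3 + x0)) ∧
    Tendsto bαop atTop (nhds bop) ∧
    Tendsto (fun α => α * |bαop α - bop|) atTop
      (nhds (x0 * |q - g * x0| / (M3 + x0))) := by
  have hsum : 0 < M3 + x0 := by linarith
  have key : ∀ α : ℝ, α ≠ 0 →
      bαop α - bop = (x0 * (q - g * x0) / (M3 + x0)) * α⁻¹ := by
    intro α hα
    rw [hbαop, hbop]
    field_simp
    ring
  have habs : ∀ α : ℝ, 0 < α →
      |bαop α - bop| = (1 / α) * x0 * |q - g * x0| / (M3 + x0) := by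
    intro α hα
    rw [key α hα.ne', abs_mul, abs_div, abs_mul, abs_of_pos hx0,
      abs_of_pos hsum, abs_inv, abs_of_pos hα]
    field_simp
  refine ⟨habs, ?_, ?_⟩
  · have h1 : Tendsto (fun α : ℝ =>
        bop + (x0 * (q - g * x0) / (M3 + x0)) * α⁻¹) atTop (nhds bop) := by
      have := tendsto_inv_atTop_zero (𝕜 := ℝ)
      have h2 := (this.const_mul (x0 * (q - g * x0) / (M3 + x0))).const_add bop
      simpa using h2
    refine h1.congr' ?_
    filter_upwards [eventually_gt_atTop (0 : ℝ)] with α hα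
    have := key α hα.ne'
    linarith
  · have h1 : Tendsto (fun _ : ℝ => x0 * |q - g * x0| / (M3 + x0)) atTop
        (nhds (x0 * |q - g * x0| / (M3 + x0))) := tendsto_const_nhds
    refine h1.congr' ?_
    filter_upwards [eventually_gt_atTop (0 : ℝ)] with α hα
    rw [habs α hα]
    field_simp
end

section
/- Let x0 > 0, M₁ > 0 and q, b, z_d ∈ ℝ. For α > 0 define g_op = -(C₄·q·x0 + C₅·(b - z_d)) / (2·x0²·(C₁ + M₁/x0⁴)) with C₁ = 2/15, C₄ = -5/12, C₅ = 2/3, and g_{α,op} = -(C₄α·q·x0 + C₅α·(b - z_d)) / (2·x0²·(C₁α + M₁/x0⁴)) with C₁α = 2/15 + 2/(3·α·x0) + 1/(α²·x0²), C₄α = -5/12 - 5/(3·α·x0) - 2/(α²·x0²), C₅α = 2/3 + 2/(α·x0). Then g_{α,op} → g_op as α → ∞, and the convergence has order 1/α: there exists a constant C > 0 such that |g_{α,op} - g_op| ≤ C/α for all α ≥ 1. -/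
open Filter

set_option maxHeartbeats 1000000 in
/-- Convergence of the optimal distributed control `g_{α,op} → g_op` on the
rectangle, with order of convergence `1/α`. -/
theorem stmt_12 (x0 M1 q b zd : ℝ) (hx0 : 0 < x0) (hM1 : 0 < M1)
    (gop : ℝ) (gαop : ℝ → ℝ)
    (hgop : gop = -((-(5 / 12)) * q * x0 + (2 / 3) * (b - zd)) /
      (2 * x0 ^ 2 * (2 / 15 + M1 / x0 ^ 4)))
    (hgαop : gαop = fun α =>
      -((-(5 / 12) - 5 / (3 * α * x0) - 2 / (α ^ 2 * x0 ^ 2)) * q * x0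
          + (2 / 3 + 2 / (α * x0)) * (b - zd)) /
        (2 * x0 ^ 2 *
          (2 / 15 + 2 / (3 * α * x0) + 1 / (α ^ 2 * x0 ^ 2) + M1 / x0 ^ 4))) :
    Tendsto gαop atTop (nhds gop) ∧
    ∃ C : ℝ, 0 < C ∧ ∀ α : ℝ, 1 ≤ α → |gαop α - gop| ≤ C / α := by
  have hx0' : x0 ≠ 0 := ne_of_gt hx0
  obtain ⟨D0, hD0⟩ : ∃ D0 : ℝ, D0 = 2 * x0 ^ 2 * (2 / 15 + M1 / x0 ^ 4) := ⟨_, rfl⟩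
  have hD0pos : 0 < D0 := by
    have h1 : 0 < M1 / x0 ^ 4 := div_pos hM1 (by positivity)
    rw [hD0]; positivity
  obtain ⟨N0, hN0⟩ : ∃ N0 : ℝ, N0 = -((-(5 / 12)) * q * x0 + (2 / 3) * (b - zd)) := ⟨_, rfl⟩
  obtain ⟨K1, hK1⟩ : ∃ K1 : ℝ,
      K1 = ((5/3) * q - 2 * (b - zd) / x0) * D0 - N0 * (4 * x0 / 3) := ⟨_, rfl⟩
  obtain ⟨K2, hK2⟩ : ∃ K2 : ℝ, K2 = (2 * q / x0) * D0 - N0 * 2 := ⟨_, rfl⟩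
  obtain ⟨C, hC⟩ : ∃ C : ℝ, C = (|K1| + |K2|) / D0 ^ 2 + 1 := ⟨_, rfl⟩
  have hCpos : 0 < C := by
    have h : 0 ≤ (|K1| + |K2|) / D0 ^ 2 := by positivity
    rw [hC]; linarith
  have key : ∀ α : ℝ, 1 ≤ α → |gαop α - gop| ≤ C / α := by
    intro α hα
    have hαpos : 0 < α := lt_of_lt_of_le one_pos hα
    have hα0 : α ≠ 0 := ne_of_gt hαpos
    have hid : gαop α - gop =
        (K1 * α + K2) / (α ^ 2 * (D0 + (4 * x0 / 3) / α + 2 / α ^ 2) * D0) := by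
      have hsumα : (0:ℝ) < 2 / 15 + 2 / (3 * α * x0) + 1 / (α ^ 2 * x0 ^ 2) + M1 / x0 ^ 4 := by
        positivity
      have hDα : (0:ℝ) < D0 + (4 * x0 / 3) / α + 2 / α ^ 2 := by positivity
      rw [hgop, hgαop, hK1, hK2, hN0, hD0]
      have hsum0 : (0:ℝ) < 2 / 15 + M1 / x0 ^ 4 := by positivity
      field_simp
      ring
    rw [hid]
    have hdenpos : 0 < α ^ 2 * (D0 + (4 * x0 / 3) / α + 2 / α ^ 2) * D0 := by positivity
    have hden : α ^ 2 * D0 ^ 2 ≤ α ^ 2 * (D0 + (4 * x0 / 3) / α + 2 / α ^ 2) * D0 := by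
      have h1 : 0 ≤ (4 * x0 / 3) / α + 2 / α ^ 2 := by positivity
      nlinarith [sq_nonneg α, sq_nonneg (α * D0)]
    have hnum : |K1 * α + K2| ≤ (|K1| + |K2|) * α := by
      calc |K1 * α + K2| ≤ |K1 * α| + |K2| := abs_add_le _ _
        _ = |K1| * α + |K2| := by rw [abs_mul, abs_of_pos hαpos]
        _ ≤ |K1| * α + |K2| * α := by
            have h2 : |K2| ≤ |K2| * α := le_mul_of_one_le_right (abs_nonneg _) hα
            linarith
        _ = (|K1| + |K2|) * α := by ring
    rw [abs_div, abs_of_pos hdenpos]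
    calc |K1 * α + K2| / (α ^ 2 * (D0 + (4 * x0 / 3) / α + 2 / α ^ 2) * D0)
        ≤ ((|K1| + |K2|) * α) / (α ^ 2 * D0 ^ 2) :=
          div_le_div₀ (by positivity) hnum (by positivity) hden
      _ = ((|K1| + |K2|) / D0 ^ 2) / α := by
          rw [div_div, div_eq_div_iff (by positivity) (by positivity)]
          ring
      _ ≤ C / α := by
          gcongr
          rw [hC]; linarith
  refine ⟨?_, C, hCpos, key⟩
  rw [← tendsto_sub_nhds_zero_iff]
  apply squeeze_zero_norm' (a := fun α : ℝ => C / α)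
  · filter_upwards [eventually_ge_atTop (1:ℝ)] with α hα
    simpa [Real.norm_eq_abs] using key α hα
  · exact Tendsto.div_atTop tendsto_const_nhds tendsto_id
end

section
/- Let 0 < r1 < r2, α > 0 and g, q, b ∈ ℝ. Let u(r) = g·(r1²/2)·( (r2/r1)²·log(r/r1) - (1/2)·(r/r1)² + 1/2 ) - q·r2·log(r/r1) + b and u_α(r) = u(r) + (1/(α·r1))·( g·(r2² - r1²)/2 - q·r2 ). Then the L² distance between u_α and u on the annulus Ω₂ = {r1 < |x| < r2} satisfies exactly ( 2π·∫_{r1}^{r2} r·(u_α(r) - u(r))² dr )^{1/2} = K₂/α, where K₂ = √π · (r2² - r1²)^{1/2} · |2·q·r2 - g·(r2² - r1²)| / (2·r1). In particular u_α converges to u in L²(Ω₂) with rate exactly 1/α as α → ∞. -/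
open Real

/-- Exact rate of convergence of the state `u_α` to `u` in `L²(Ω₂)` on the
annulus: `‖u_α - u‖_{L²(Ω₂)} = K₂/α`. -/
theorem stmt_15 (r1 r2 α g q b : ℝ) (hr1 : 0 < r1) (hr12 : r1 < r2) (hα : 0 < α)
    (u uα : ℝ → ℝ)
    (hu : u = fun r =>
      g * (r1 ^ 2 / 2) * ((r2 / r1) ^ 2 * Real.log (r / r1)
        - (1 / 2) * (r / r1) ^ 2 + 1 / 2) - q * r2 * Real.log (r / r1) + b)
    (huα : uα = fun r =>
      u r + (1 / (α * r1)) * (g * (r2 ^ 2 - r1 ^ 2) / 2 - q * r2)) :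
    Real.sqrt (2 * π * ∫ r in r1..r2, r * (uα r - u r) ^ 2) =
      (Real.sqrt π * Real.sqrt (r2 ^ 2 - r1 ^ 2)
        * |2 * q * r2 - g * (r2 ^ 2 - r1 ^ 2)| / (2 * r1)) / α := by
  set c : ℝ := (1 / (α * r1)) * (g * (r2 ^ 2 - r1 ^ 2) / 2 - q * r2) with hc
  have hdiff : ∀ r, uα r - u r = c := by
    intro r; simp [huα]
  have hInt : (∫ r in r1..r2, r * (uα r - u r) ^ 2)
      = (r2 ^ 2 - r1 ^ 2) / 2 * c ^ 2 := by
    simp only [hdiff]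
    rw [intervalIntegral.integral_mul_const, integral_id]
  have hΔ : (0:ℝ) ≤ r2 ^ 2 - r1 ^ 2 := by nlinarith
  have hπ : (0:ℝ) ≤ π := pi_pos.le
  have : 2 * π * ((r2 ^ 2 - r1 ^ 2) / 2 * c ^ 2)
      = π * ((r2 ^ 2 - r1 ^ 2) * c ^ 2) := by ring
  rw [hInt, this, Real.sqrt_mul hπ, Real.sqrt_mul hΔ, Real.sqrt_sq_eq_abs]
  have hcabs : |c| = |2 * q * r2 - g * (r2 ^ 2 - r1 ^ 2)| / (2 * r1) / α := by
    have h1 : c = -(2 * q * r2 - g * (r2 ^ 2 - r1 ^ 2)) / (2 * r1) / α := by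
      rw [hc]; field_simp [hr1.ne', hα.ne']; ring
    rw [h1, abs_div, abs_div, abs_neg, abs_of_pos hα,
      abs_of_pos (by positivity : (0:ℝ) < 2 * r1)]
  rw [hcabs]; ring
end

section
/- Let 0 < r1 < r2, M₃ > 0 and g, q, z_d ∈ ℝ. For b ∈ ℝ define u_b(r) = g·(r1²/2)·( (r2/r1)²·log(r/r1) - (1/2)·(r/r1)² + 1/2 ) - q·r2·log(r/r1) + b and the cost J₃(b) = π·∫_{r1}^{r2} r·(u_b(r) - z_d)² dr + π·M₃·r1·b². Then J₃ attains its minimum over ℝ at the unique point b_op = -( E₅·g·r1² + E₆·q·r1 - 2·E₃·z_d ) / ( 2·(E₃ + M₃/r1) ), where E₃ = (1/2)·( (r2/r1)² - 1 ), E₅ = (1/2)·( -1/4 + (r2/r1)² + (r2/r1)⁴·( log(r2/r1) - 3/4 ) ), and E₆ = -( (1/2)·(r2/r1) + (r2/r1)³·( log(r2/r1) - 1/2 ) ). -/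
open Real

set_option maxHeartbeats 1000000 in
/-- Boundary optimal control on the constant temperature `b` on the inner circle
of the annulus: `J₃` attains its minimum over ℝ at the unique point `b_op`. -/
theorem stmt_16 (r1 r2 M3 g q zd : ℝ) (hr1 : 0 < r1) (hr12 : r1 < r2) (hM3 : 0 < M3)
    (J3 : ℝ → ℝ) (bop E3 E5 E6 : ℝ)
    (hJ3 : J3 = fun b =>
      π * (∫ r in r1..r2, r *
        ((g * (r1 ^ 2 / 2) * ((r2 / r1) ^ 2 * Real.log (r / r1)
            - (1 / 2) * (r / r1) ^ 2 + 1 / 2)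
          - q * r2 * Real.log (r / r1) + b) - zd) ^ 2)
      + π * M3 * r1 * b ^ 2)
    (hE3 : E3 = (1 / 2) * ((r2 / r1) ^ 2 - 1))
    (hE5 : E5 = (1 / 2) * (-(1 / 4) + (r2 / r1) ^ 2
      + (r2 / r1) ^ 4 * (Real.log (r2 / r1) - 3 / 4)))
    (hE6 : E6 = -((1 / 2) * (r2 / r1)
      + (r2 / r1) ^ 3 * (Real.log (r2 / r1) - 1 / 2)))
    (hbop : bop = -(E5 * g * r1 ^ 2 + E6 * q * r1 - 2 * E3 * zd) /
      (2 * (E3 + M3 / r1))) :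
    (∀ b : ℝ, J3 bop ≤ J3 b) ∧ ∀ b : ℝ, b ≠ bop → J3 bop < J3 b := by
  have hr2 : 0 < r2 := hr1.trans hr12
  have hr1' : r1 ≠ 0 := ne_of_gt hr1
  have huIcc : Set.uIcc r1 r2 = Set.Icc r1 r2 := Set.uIcc_of_le hr12.le
  have hpos : ∀ x ∈ Set.uIcc r1 r2, 0 < x := by
    intro x hx
    rw [huIcc] at hx
    exact lt_of_lt_of_le hr1 hx.1
  -- continuity of log (r / r1) on the interval
  have hlogc : ContinuousOn (fun r : ℝ => Real.log (r / r1)) (Set.uIcc r1 r2) := by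
    apply Real.continuousOn_log.comp (continuousOn_id.div_const r1)
    intro x hx
    simp only [Set.mem_compl_iff, Set.mem_singleton_iff, id]
    exact div_ne_zero (ne_of_gt (hpos x hx)) hr1'
  set F : ℝ → ℝ := fun r => g * (r1 ^ 2 / 2) * ((r2 / r1) ^ 2 * Real.log (r / r1)
            - (1 / 2) * (r / r1) ^ 2 + 1 / 2) - q * r2 * Real.log (r / r1) - zd with hF
  have hFc : ContinuousOn F (Set.uIcc r1 r2) := by
    apply ContinuousOn.sub
    apply ContinuousOn.sub
    · exact continuousOn_const.mul (((continuousOn_const.mul hlogc).sub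
        (continuousOn_const.mul ((continuousOn_id.div_const r1).pow 2))).add continuousOn_const)
    · exact continuousOn_const.mul hlogc
    · exact continuousOn_const
  -- integral of r * log (r / r1)
  have hIL : (∫ r in r1..r2, r * Real.log (r / r1))
      = r2 ^ 2 / 2 * Real.log (r2 / r1) - r2 ^ 2 / 4 + r1 ^ 2 / 4 := by
    have hderiv : ∀ x ∈ Set.uIcc r1 r2,
        HasDerivAt (fun r : ℝ => r ^ 2 / 2 * Real.log (r / r1) - r ^ 2 / 4)
          (x * Real.log (x / r1)) x := by
      intro x hx
      have hx0 : 0 < x := hpos x hx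
      have hxd : x / r1 ≠ 0 := div_ne_zero (ne_of_gt hx0) hr1'
      have h1 : HasDerivAt (fun r : ℝ => r ^ 2 / 2) x x := by
        simpa using (hasDerivAt_pow 2 x).div_const 2
      have hdiv : HasDerivAt (fun r : ℝ => r / r1) (1 / r1) x := by
        simpa using (hasDerivAt_id x).div_const r1
      have hlog : HasDerivAt (fun r : ℝ => Real.log (r / r1)) (1 / x) x := by
        have := (Real.hasDerivAt_log hxd).comp x hdiv
        refine this.congr_deriv ?_
        field_simp
      have h2 : HasDerivAt (fun r : ℝ => r ^ 2 / 4) (x / 2) x := by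
        have := (hasDerivAt_pow 2 x).div_const 4
        refine this.congr_deriv ?_
        ring
      have := (h1.mul hlog).sub h2
      refine this.congr_deriv ?_
      field_simp
      ring
    have hint : IntervalIntegrable (fun r : ℝ => r * Real.log (r / r1)) MeasureTheory.volume r1 r2 :=
      (continuousOn_id.mul hlogc).intervalIntegrable
    have := intervalIntegral.integral_eq_sub_of_hasDerivAt hderiv hint
    rw [this, div_self hr1', Real.log_one]
    ring
  have hI1 : (∫ r in r1..r2, r) = (r2 ^ 2 - r1 ^ 2) / 2 := by
    simpa [sq] using intervalIntegral.integral_id (a := r1) (b := r2)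
  have hI3 : (∫ r in r1..r2, r ^ 3) = (r2 ^ 4 - r1 ^ 4) / 4 := by
    rw [integral_pow]
    norm_num
  -- the linear coefficient B
  set c1 : ℝ := g * (r1 ^ 2 / 2) * (r2 / r1) ^ 2 - q * r2 with hc1
  set c3 : ℝ := g * r1 ^ 2 / 4 - zd with hc3
  have hB : (∫ r in r1..r2, r * F r)
      = c1 * (r2 ^ 2 / 2 * Real.log (r2 / r1) - r2 ^ 2 / 4 + r1 ^ 2 / 4)
        + (-(g / 4) * ((r2 ^ 4 - r1 ^ 4) / 4) + c3 * ((r2 ^ 2 - r1 ^ 2) / 2)) := by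
    have hrw : (fun r : ℝ => r * F r)
        = fun r : ℝ => c1 * (r * Real.log (r / r1)) + (-(g / 4) * r ^ 3 + c3 * r) := by
      funext r
      simp only [hF, hc1, hc3]
      field_simp
      ring
    rw [hrw]
    have hpoly : IntervalIntegrable (fun r : ℝ => -(g / 4) * r ^ 3 + c3 * r)
        MeasureTheory.volume r1 r2 := by
      apply Continuous.intervalIntegrable
      continuity
    have hilog : IntervalIntegrable (fun r : ℝ => c1 * (r * Real.log (r / r1)))
        MeasureTheory.volume r1 r2 :=
      (continuousOn_const.mul (continuousOn_id.mul hlogc)).intervalIntegrable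
    rw [intervalIntegral.integral_add hilog hpoly, intervalIntegral.integral_const_mul, hIL,
      intervalIntegral.integral_add ((Continuous.intervalIntegrable (by continuity) _ _))
        ((Continuous.intervalIntegrable (by continuity) _ _)),
      intervalIntegral.integral_const_mul, intervalIntegral.integral_const_mul, hI1, hI3]
  set B : ℝ := ∫ r in r1..r2, r * F r with hBdef
  set A : ℝ := ∫ r in r1..r2, r * (F r) ^ 2 with hAdef
  set K : ℝ := (r2 ^ 2 - r1 ^ 2) / 2 + M3 * r1 with hK
  have hKpos : 0 < K := by
    rw [hK]
    nlinarith [mul_pos hM3 hr1, sq_nonneg (r2 - r1), sq_nonneg (r2 + r1)]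
  -- quadratic expansion of J3
  have hJexp : ∀ b : ℝ, J3 b = π * (A + 2 * B * b + K * b ^ 2) := by
    intro b
    rw [hJ3]
    simp only
    have hrw : (fun r : ℝ =>
        r * ((g * (r1 ^ 2 / 2) * ((r2 / r1) ^ 2 * Real.log (r / r1)
            - (1 / 2) * (r / r1) ^ 2 + 1 / 2)
          - q * r2 * Real.log (r / r1) + b) - zd) ^ 2)
        = fun r : ℝ => r * (F r) ^ 2 + ((2 * b) * (r * F r) + b ^ 2 * r) := by
      funext r
      simp only [hF]
      ring
    rw [hrw]
    have h1 : IntervalIntegrable (fun r : ℝ => r * (F r) ^ 2) MeasureTheory.volume r1 r2 :=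
      (continuousOn_id.mul (hFc.pow 2)).intervalIntegrable
    have h2 : IntervalIntegrable (fun r : ℝ => (2 * b) * (r * F r)) MeasureTheory.volume r1 r2 :=
      (continuousOn_const.mul (continuousOn_id.mul hFc)).intervalIntegrable
    have h3 : IntervalIntegrable (fun r : ℝ => b ^ 2 * r) MeasureTheory.volume r1 r2 :=
      Continuous.intervalIntegrable (by continuity) _ _
    rw [intervalIntegral.integral_add h1 (h2.add h3), intervalIntegral.integral_add h2 h3,
      intervalIntegral.integral_const_mul, intervalIntegral.integral_const_mul, hI1,
      ← hAdef, ← hBdef, hK]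
    ring
  -- bop is the minimizer: B = -bop * K
  have hEpos : 0 < E3 + M3 / r1 := by
    have h1 : 0 < E3 := by
      rw [hE3]
      have : 1 < (r2 / r1) ^ 2 := by
        have : 1 < r2 / r1 := (one_lt_div hr1).mpr hr12
        nlinarith
      linarith
    have h2 : 0 < M3 / r1 := div_pos hM3 hr1
    linarith
  have hD0 : (2 : ℝ) * (E3 + M3 / r1) ≠ 0 := by positivity
  have hD : bop * (2 * (E3 + M3 / r1)) = -(E5 * g * r1 ^ 2 + E6 * q * r1 - 2 * E3 * zd) := by
    rw [hbop, div_mul_cancel₀ _ hD0]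
  have hKD : K = r1 ^ 2 * (E3 + M3 / r1) := by
    rw [hK, hE3]
    field_simp
  have hBN : B = (E5 * g * r1 ^ 2 + E6 * q * r1 - 2 * E3 * zd) * r1 ^ 2 / 2 := by
    rw [hB, hE5, hE6, hE3, hc1, hc3]
    rw [Real.log_div (ne_of_gt hr2) hr1']
    field_simp
    ring
  have hBval : B = -bop * K := by
    rw [hBN, hKD]
    linear_combination (r1 ^ 2 / 2) * hD
  -- conclude
  have hkey : ∀ b : ℝ, J3 b - J3 bop = π * K * (b - bop) ^ 2 := by
    intro b
    rw [hJexp b, hJexp bop, hBval]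
    ring
  constructor
  · intro b
    have h := hkey b
    nlinarith [sq_nonneg (b - bop), Real.pi_pos, mul_pos Real.pi_pos hKpos]
  · intro b hb
    have h := hkey b
    have h0 : b - bop ≠ 0 := sub_ne_zero.mpr hb
    have hsq : 0 < (b - bop) ^ 2 := by positivity
    nlinarith [mul_pos Real.pi_pos hKpos]
end

section
/- Let 0 < r1 < r2, M₃ > 0 and g, q, z_d ∈ ℝ. For b ∈ ℝ define u_b(r) = g·(r1²/3)·( 1/2 - (1/2)·(r/r1)² + (r2/r1)³ - (r2/r)·(r2/r1)² ) + q·(r2²/r1)·( r1/r - 1 ) + b and the cost J₃(b) = 2π·∫_{r1}^{r2} r²·(u_b(r) - z_d)² dr + 2π·M₃·r1²·b². Then J₃ attains its minimum over ℝ at the unique point b_op = -( G₅·g·r1² + G₆·q·(r2²/r1) - 2·G₃·z_d ) / ( 2·(G₃ + M₃/r1) ), where G₃ = (1/3)·( (r2/r1)³ - 1 ), G₅ = -2/45 + (2/9)·(r2/r1)³ - (2/5)·(r2/r1)⁵ + (2/9)·(r2/r1)⁶, and G₆ = -1/3 + (r2/r1)² - (2/3)·(r2/r1)³. -/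
open Real

noncomputable def Fant (A B C r : ℝ) : ℝ :=
  A^2*r^3/3 + B^2*r^7/7 + C^2*r^1 + 2*A*B*r^5/5 + (A*C*r^2 + B*C*r^4/2)

lemma int_lemma (r1 r2 A B C : ℝ) (h1 : 0 < r1) (h12 : r1 ≤ r2) :
    ∫ r in r1..r2, (A + B*r^2 + C/r)^2 * r^2 = Fant A B C r2 - Fant A B C r1 := by
  have hpos : ∀ x ∈ Set.uIcc r1 r2, 0 < x := by
    intro x hx
    rw [Set.uIcc_of_le h12] at hx
    exact lt_of_lt_of_le h1 hx.1
  apply intervalIntegral.integral_eq_sub_of_hasDerivAt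
  · intro x hx
    have hx0 : x ≠ 0 := (hpos x hx).ne'
    have h := ((((((hasDerivAt_pow 3 x).const_mul (A^2)).div_const 3).add
        (((hasDerivAt_pow 7 x).const_mul (B^2)).div_const 7)).add
        ((hasDerivAt_pow 1 x).const_mul (C^2))).add
        (((hasDerivAt_pow 5 x).const_mul (2*A*B)).div_const 5)).add
        (((hasDerivAt_pow 2 x).const_mul (A*C)).add
        (((hasDerivAt_pow 4 x).const_mul (B*C)).div_const 2))
    convert h using 1
    · funext y; simp only [Fant, Pi.add_apply]
    push_cast
    field_simp
    ring
  · apply ContinuousOn.intervalIntegrable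
    apply ContinuousOn.mul _ (by fun_prop)
    apply ContinuousOn.pow
    apply ContinuousOn.add (by fun_prop)
    exact continuousOn_const.div continuousOn_id fun x hx => (hpos x hx).ne'

set_option maxHeartbeats 1000000 in
/-- Boundary optimal control on the constant temperature `b` on the inner sphere
of the spherical shell: `J₃` attains its minimum over ℝ at the unique point
`b_op`. -/
theorem stmt_19 (r1 r2 M3 g q zd : ℝ) (hr1 : 0 < r1) (hr12 : r1 < r2) (hM3 : 0 < M3)
    (J3 : ℝ → ℝ) (bop G3 G5 G6 : ℝ)
    (hJ3 : J3 = fun b =>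
      2 * π * (∫ r in r1..r2, r ^ 2 *
        ((g * (r1 ^ 2 / 3) * (1 / 2 - (1 / 2) * (r / r1) ^ 2 + (r2 / r1) ^ 3
            - (r2 / r) * (r2 / r1) ^ 2)
          + q * (r2 ^ 2 / r1) * (r1 / r - 1) + b) - zd) ^ 2)
      + 2 * π * M3 * r1 ^ 2 * b ^ 2)
    (hG3 : G3 = (1 / 3) * ((r2 / r1) ^ 3 - 1))
    (hG5 : G5 = -(2 / 45) + (2 / 9) * (r2 / r1) ^ 3 - (2 / 5) * (r2 / r1) ^ 5
      + (2 / 9) * (r2 / r1) ^ 6)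
    (hG6 : G6 = -(1 / 3) + (r2 / r1) ^ 2 - (2 / 3) * (r2 / r1) ^ 3)
    (hbop : bop = -(G5 * g * r1 ^ 2 + G6 * q * (r2 ^ 2 / r1) - 2 * G3 * zd) /
      (2 * (G3 + M3 / r1))) :
    (∀ b : ℝ, J3 bop ≤ J3 b) ∧ ∀ b : ℝ, b ≠ bop → J3 bop < J3 b := by
  have hr10 : r1 ≠ 0 := hr1.ne'
  have hle : r1 ≤ r2 := hr12.le
  have keyint : ∀ b : ℝ, (∫ r in r1..r2, r ^ 2 *
        ((g * (r1 ^ 2 / 3) * (1 / 2 - (1 / 2) * (r / r1) ^ 2 + (r2 / r1) ^ 3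
            - (r2 / r) * (r2 / r1) ^ 2)
          + q * (r2 ^ 2 / r1) * (r1 / r - 1) + b) - zd) ^ 2)
      = Fant ((g*(r1^2/3)*(1/2+(r2/r1)^3) - q*(r2^2/r1) - zd) + b) (-g/6)
          (-g*r2^3/3 + q*r2^2) r2
        - Fant ((g*(r1^2/3)*(1/2+(r2/r1)^3) - q*(r2^2/r1) - zd) + b) (-g/6)
          (-g*r2^3/3 + q*r2^2) r1 := by
    intro b
    rw [← int_lemma r1 r2 _ _ _ hr1 hle]
    apply intervalIntegral.integral_congr
    intro r hr
    have hrpos : 0 < r := by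
      rw [Set.uIcc_of_le hle] at hr
      exact lt_of_lt_of_le hr1 hr.1
    have hr0 : r ≠ 0 := hrpos.ne'
    field_simp
    ring
  set α : ℝ := g*(r1^2/3)*(1/2+(r2/r1)^3) - q*(r2^2/r1) - zd with hα
  set β : ℝ := -g/6 with hβ
  set γ : ℝ := -g*r2^3/3 + q*r2^2 with hγ
  have hd : 0 < (r2^3 - r1^3)/3 + M3*r1^2 := by
    have h3 : r1^3 < r2^3 := by nlinarith [mul_pos hr1 hr1, mul_pos (mul_pos hr1 hr1) hr1, sq_nonneg (r1+r2), mul_pos (sub_pos.mpr hr12) (mul_pos hr1 hr1)]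
    nlinarith
  have hKpos : 0 < 2*π*((r2^3-r1^3)/3 + M3*r1^2) :=
    mul_pos (by positivity) hd
  have hden : G3 + M3 / r1 ≠ 0 := by
    have h1 : (1:ℝ) < (r2/r1)^3 := by
      have h0 : 1 < r2/r1 := (one_lt_div hr1).mpr hr12
      nlinarith
    have h2 : 0 < M3 / r1 := div_pos hM3 hr1
    rw [hG3]
    nlinarith
  have hdne : (2*(G3 + M3/r1)) ≠ 0 := mul_ne_zero two_ne_zero hden
  have hbm : bop * (2*(G3 + M3/r1))
      = -(G5*g*r1^2 + G6*q*(r2^2/r1) - 2*G3*zd) := by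
    rw [hbop, div_mul_cancel₀ _ hdne]
  rw [hG3, hG5, hG6] at hbm
  have hrel : 2*bop*(3*r1*((r2^3-r1^3)/3 + M3*r1^2))
      = -(g*(-(2/15)*r1^6 + (2/3)*r2^3*r1^3 - (6/5)*r2^5*r1 + (2/3)*r2^6)
        + q*(-(r2^2*r1^3) + 3*r2^4*r1 - 2*r2^5) - 2*zd*(r2^3*r1 - r1^4)) := by
    linear_combination (norm := (field_simp; ring)) (3*r1^4) * hbm
  have hvertex : 2*((r2^3/3 - r1^3/3) + M3*r1^2)*bop
      + 2*α*(r2^3/3 - r1^3/3)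
      + ((2*β*r2^5/5 + γ*r2^2) - (2*β*r1^5/5 + γ*r1^2)) = 0 := by
    rw [hα, hβ, hγ]
    linear_combination (norm := (field_simp; ring)) (1/(3*r1)) * hrel
  have main : ∀ b : ℝ, J3 b = J3 bop
      + 2*π*((r2^3-r1^3)/3 + M3*r1^2)*(b-bop)^2 := by
    intro b
    rw [hJ3]
    simp only [keyint, Fant]
    linear_combination (2*π*(b-bop)) * hvertex
  refine ⟨fun b => ?_, fun b hb => ?_⟩
  · rw [main b]
    nlinarith [mul_nonneg hKpos.le (sq_nonneg (b - bop))]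
  · rw [main b]
    have hb0 : b - bop ≠ 0 := sub_ne_zero.mpr hb
    have h2 : 0 < (b - bop)^2 := by positivity
    nlinarith [mul_pos hKpos h2]
end
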